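/- Let F be a field of characteristic not 2 and let λ ∈ F with λ ≠ 0, λ ≠ 1 and λ ≠ -1. Let V be a 2n-dimensional F-vector space with a symplectic form s and let u ∈ Sp(s) satisfy (u - λ·id) ∘ (u - λ⁻¹·id) = 0. Let b be a nondegenerate symmetric bilinear form on the space F^n. Then there exist a Lagrangian L of (V, s) and a linear isomorphism φ : F^n → L such that s(φ x, u(φ y)) = b(x, y) for all x, y ∈ F^n (i.e., the bilinear form s_{u,L} : (x, y) ↦ s(x, u y) on L is equivalent to b). -/
import Mathlib


set_option maxHeartbeats 2000000 in
/-- Let `F` be a field of characteristic not 2 and `λ ∈ F \ {0, 1, -1}`. Let `(V, s)` be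
a `2n`-dimensional symplectic space over `F` and `u ∈ Sp(s)` annihilated by
`(t - λ)(t - λ⁻¹)`. Let `b` be a nondegenerate symmetric bilinear form on `F^n`. Then
there exist a Lagrangian `L` of `(V, s)` and a linear isomorphism `φ : F^n → L` such
that `s(φ x, u (φ y)) = b(x, y)` for all `x, y`, i.e. the form `(x, y) ↦ s(x, u y)` on
`L` is equivalent to `b`. -/
theorem exists_lagrangian_with_prescribed_symmetric_form
    (F : Type*) [Field F] (hF : ringChar F ≠ 2)
    (lam : F) (hlam0 : lam ≠ 0) (hlam1 : lam ≠ 1) (hlam2 : lam ≠ -1)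
    (n : ℕ)
    (V : Type*) [AddCommGroup V] [Module F V] [FiniteDimensional F V]
    (hdim : Module.finrank F V = 2 * n)
    (s : V →ₗ[F] V →ₗ[F] F)
    (halt : ∀ x, s x x = 0)
    (hnd : ∀ x, (∀ y, s x y = 0) → x = 0)
    (u : V ≃ₗ[F] V)
    (hu : ∀ x y, s (u x) (u y) = s x y)
    (hann : ((u : V →ₗ[F] V) - lam • LinearMap.id) ∘ₗ
      ((u : V →ₗ[F] V) - lam⁻¹ • LinearMap.id) = 0)
    (b : (Fin n → F) →ₗ[F] (Fin n → F) →ₗ[F] F)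
    (hbsymm : ∀ x y, b x y = b y x)
    (hbnd : ∀ x, (∀ y, b x y = 0) → x = 0) :
    ∃ L : Submodule F V,
      (∀ x ∈ L, ∀ y ∈ L, s x y = 0) ∧
      2 * Module.finrank F L = Module.finrank F V ∧
      ∃ φ : (Fin n → F) ≃ₗ[F] L,
        ∀ x y : Fin n → F, s (φ x : V) (u (φ y : V)) = b x y := by
  classical
  set mu := lam⁻¹ with hmu
  have hmul : lam * mu = 1 := mul_inv_cancel₀ hlam0
  have hlam_sq : lam * lam ≠ 1 := by
    intro h
    rcases mul_eq_zero.mp (show (lam - 1) * (lam + 1) = 0 by linear_combination h) with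
      h1 | h2
    · exact hlam1 (by linear_combination h1)
    · exact hlam2 (eq_neg_of_add_eq_zero_left h2)
  have hmu0 : mu ≠ 0 := inv_ne_zero hlam0
  have hmu_sq : mu * mu ≠ 1 := by
    intro h
    apply hlam_sq
    calc lam * lam = lam * lam * (mu * mu) := by rw [h, mul_one]
      _ = (lam * mu) * (lam * mu) := by ring
      _ = 1 := by rw [hmul, one_mul]
  have hne : mu ≠ lam := by
    intro h
    apply hlam_sq
    have := hmul
    rw [h] at this
    exact this
  -- skew symmetry
  have hskew : ∀ x y : V, s x y = - s y x := by
    intro x y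
    have h := halt (x + y)
    simp only [map_add, LinearMap.add_apply, halt] at h
    linear_combination h
  -- eigenspaces
  set A := LinearMap.ker ((u : V →ₗ[F] V) - lam • LinearMap.id) with hA
  set B := LinearMap.ker ((u : V →ₗ[F] V) - mu • LinearMap.id) with hB
  have hmemA : ∀ x : V, x ∈ A ↔ u x = lam • x := by
    intro x
    simp [hA, LinearMap.mem_ker, sub_eq_zero]
  have hmemB : ∀ x : V, x ∈ B ↔ u x = mu • x := by
    intro x
    simp [hB, LinearMap.mem_ker, sub_eq_zero]
  have hann' : ∀ v : V, u (u v) - (lam + mu) • u v + (lam * mu) • v = 0 := by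
    intro v
    have := congrArg (fun f => f v) hann
    simp only [LinearMap.comp_apply, LinearMap.sub_apply, LinearMap.smul_apply,
      LinearMap.id_apply, LinearMap.coe_coe, LinearMap.zero_apply, map_sub, map_smul] at this
    linear_combination (norm := module) this
  -- decomposition
  have hdecomp : ∀ v : V, ∃ a ∈ A, ∃ c ∈ B, v = a + c := by
    intro v
    have h : u (u v) = (lam + mu) • u v - (lam * mu) • v := by
      linear_combination (norm := module) hann' v
    have hlm : lam - mu ≠ 0 := sub_ne_zero.mpr (Ne.symm hne)
    have hml : mu - lam ≠ 0 := sub_ne_zero.mpr hne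
    refine ⟨(lam - mu)⁻¹ • (u v - mu • v), ?_, (mu - lam)⁻¹ • (u v - lam • v), ?_, ?_⟩
    · rw [hmemA, map_smul, map_sub, map_smul, h]
      module
    · rw [hmemB, map_smul, map_sub, map_smul, h]
      module
    · match_scalars <;> field_simp <;> ring
  have hdisj : ∀ v : V, v ∈ A → v ∈ B → v = 0 := by
    intro v hvA hvB
    rw [hmemA] at hvA
    rw [hmemB] at hvB
    have : (lam - mu) • v = 0 := by
      rw [sub_smul, ← hvA, ← hvB, sub_self]
    have hlm : lam - mu ≠ 0 := sub_ne_zero.mpr (Ne.symm hne)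
    exact (smul_eq_zero.mp this).resolve_left hlm
  -- isotropy
  have hA0 : ∀ x ∈ A, ∀ y ∈ A, s x y = 0 := by
    intro x hx y hy
    have h := hu x y
    rw [(hmemA x).mp hx, (hmemA y).mp hy] at h
    simp only [map_smul, LinearMap.smul_apply, smul_eq_mul] at h
    have : (lam * lam - 1) * s x y = 0 := by linear_combination h
    rcases mul_eq_zero.mp this with h1 | h2
    · exact absurd (sub_eq_zero.mp h1) hlam_sq
    · exact h2
  have hB0 : ∀ x ∈ B, ∀ y ∈ B, s x y = 0 := by
    intro x hx y hy
    have h := hu x y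
    rw [(hmemB x).mp hx, (hmemB y).mp hy] at h
    simp only [map_smul, LinearMap.smul_apply, smul_eq_mul] at h
    have : (mu * mu - 1) * s x y = 0 := by linear_combination h
    rcases mul_eq_zero.mp this with h1 | h2
    · exact absurd (sub_eq_zero.mp h1) hmu_sq
    · exact h2
  -- the pairing
  set P : A →ₗ[F] B →ₗ[F] F := (s.domRestrict A).compl₂ B.subtype with hP
  have hPapp : ∀ (x : A) (y : B), P x y = s (x : V) (y : V) := fun x y => rfl
  have hPinj : Function.Injective P := by
    rw [← LinearMap.ker_eq_bot, LinearMap.ker_eq_bot']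
    intro x hx
    have hx' : ∀ y : B, s (x : V) (y : V) = 0 := by
      intro y
      have h := LinearMap.congr_fun hx y
      rw [LinearMap.zero_apply] at h
      rw [hPapp] at h
      exact h
    have : (x : V) = 0 := by
      apply hnd
      intro y
      obtain ⟨a, ha, c, hc, rfl⟩ := hdecomp y
      rw [map_add, hA0 _ x.2 _ ha, hx' ⟨c, hc⟩, add_zero]
    exact Subtype.ext this
  have hPflipinj : Function.Injective P.flip := by
    rw [← LinearMap.ker_eq_bot, LinearMap.ker_eq_bot']
    intro y hy
    have hy' : ∀ x : A, s (x : V) (y : V) = 0 := by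
      intro x
      have h := LinearMap.congr_fun hy x
      rw [LinearMap.zero_apply] at h
      exact h
    have : (y : V) = 0 := by
      apply hnd
      intro v
      obtain ⟨a, ha, c, hc, rfl⟩ := hdecomp v
      rw [map_add]
      rw [show s (y:V) a = - s a (y:V) from hskew _ _, hy' ⟨a, ha⟩]
      rw [hB0 _ y.2 _ hc]
      ring
    exact Subtype.ext this
  -- dimensions
  have hAB : Module.finrank F A + Module.finrank F B = 2 * n := by
    have hsup : A ⊔ B = ⊤ := by
      rw [eq_top_iff]
      intro v _
      obtain ⟨a, ha, c, hc, rfl⟩ := hdecomp v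
      exact Submodule.add_mem_sup ha hc
    have hinf : A ⊓ B = ⊥ := by
      rw [eq_bot_iff]
      intro v hv
      exact (Submodule.mem_bot F).mpr (hdisj v hv.1 hv.2)
    have := Submodule.finrank_sup_add_finrank_inf_eq A B
    rw [hsup, hinf, finrank_top, hdim] at this
    simpa using this.symm
  have hALEB : Module.finrank F A ≤ Module.finrank F B := by
    have := LinearMap.finrank_le_finrank_of_injective hPinj
    rwa [Subspace.dual_finrank_eq] at this
  have hBLEA : Module.finrank F B ≤ Module.finrank F A := by
    have := LinearMap.finrank_le_finrank_of_injective hPflipinj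
    rwa [Subspace.dual_finrank_eq] at this
  have hAeqB : Module.finrank F A = Module.finrank F B := le_antisymm hALEB hBLEA
  have hdimA : Module.finrank F A = n := by omega
  have hdimB : Module.finrank F B = n := by omega
  -- perfect pairing equivalence
  have hdimg : Module.finrank F B = Module.finrank F (Module.Dual F A) := by
    rw [Subspace.dual_finrank_eq, hAeqB]
  set g : B ≃ₗ[F] Module.Dual F A := P.flip.linearEquivOfInjective hPflipinj hdimg with hg
  have hgapp : ∀ (y : B) (x : A), g y x = s (x : V) (y : V) := by
    intro y x
    rw [hg, LinearMap.linearEquivOfInjective_apply]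
    rfl
  -- basis
  set eFn : (Fin n → F) ≃ₗ[F] A := (Module.finBasisOfFinrankEq F A hdimA).equivFun.symm with heFn
  set c : F := (mu - lam)⁻¹ with hc
  set b' : A →ₗ[F] A →ₗ[F] F :=
    b.compl₁₂ (eFn.symm : A →ₗ[F] (Fin n → F)) (eFn.symm : A →ₗ[F] (Fin n → F)) with hb'
  have hb'app : ∀ x y : A, b' x y = b (eFn.symm x) (eFn.symm y) := fun x y => rfl
  have hb'symm : ∀ x y : A, b' x y = b' y x := by
    intro x y; rw [hb'app, hb'app, hbsymm]
  set T : A →ₗ[F] B := (g.symm : Module.Dual F A →ₗ[F] B) ∘ₗ (c • b'.flip) with hT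
  have hTapp : ∀ x y : A, s (x : V) (T y : V) = c * b' x y := by
    intro x y
    have h1 : g (T y) = (c • b'.flip) y := g.apply_symm_apply ((c • b'.flip) y)
    have h2 := LinearMap.congr_fun h1 x
    rw [hgapp] at h2
    rw [h2, LinearMap.smul_apply, LinearMap.smul_apply, LinearMap.flip_apply, smul_eq_mul]
  -- the graph
  set j : A →ₗ[F] V := A.subtype + B.subtype ∘ₗ T with hj
  have hjapp : ∀ x : A, j x = (x : V) + (T x : V) := fun x => rfl
  have hjinj : Function.Injective j := by
    rw [← LinearMap.ker_eq_bot, LinearMap.ker_eq_bot']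
    intro x hx
    rw [hjapp] at hx
    have hxB : (x : V) ∈ B := by
      rw [eq_neg_of_add_eq_zero_left hx]
      exact B.neg_mem (T x).2
    have := hdisj (x : V) x.2 hxB
    exact Subtype.ext this
  refine ⟨LinearMap.range j, ?_, ?_, ?_⟩
  · rintro _ ⟨x, rfl⟩ _ ⟨y, rfl⟩
    rw [hjapp, hjapp]
    simp only [map_add, LinearMap.add_apply]
    rw [hA0 _ x.2 _ y.2, hB0 _ (T x).2 _ (T y).2, hTapp]
    rw [show s ((T x : V)) (y : V) = - s (y : V) ((T x : V)) from hskew _ _, hTapp]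
    rw [hb'symm y x]
    ring
  · rw [LinearMap.finrank_range_of_inj hjinj, hdimA, hdim]
  · refine ⟨eFn.trans (LinearEquiv.ofInjective j hjinj), ?_⟩
    intro x y
    have hcoe : ∀ z : Fin n → F,
        ((eFn.trans (LinearEquiv.ofInjective j hjinj)) z : V) = j (eFn z) := fun z => rfl
    rw [hcoe, hcoe, hjapp, hjapp]
    set a1 := eFn x with ha1
    set a2 := eFn y with ha2
    have hua : u (a2 : V) = lam • (a2 : V) := (hmemA _).mp a2.2
    have hub : u (T a2 : V) = mu • (T a2 : V) := (hmemB _).mp (T a2).2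
    rw [show u ((a2 : V) + (T a2 : V)) = lam • (a2 : V) + mu • (T a2 : V) by
      rw [map_add, hua, hub]]
    simp only [map_add, map_smul, LinearMap.add_apply, LinearMap.smul_apply, smul_eq_mul]
    rw [hA0 _ a1.2 _ a2.2, hB0 _ (T a1).2 _ (T a2).2, hTapp]
    rw [show s ((T a1 : V)) (a2 : V) = - s (a2 : V) ((T a1 : V)) from hskew _ _, hTapp]
    rw [hb'symm a2 a1]
    have hb'val : b' a1 a2 = b x y := by
      rw [hb'app, ha1, ha2, LinearEquiv.symm_apply_apply, LinearEquiv.symm_apply_apply]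
    rw [hb'val]
    have hcml : c * (mu - lam) = 1 := inv_mul_cancel₀ (sub_ne_zero.mpr hne)
    linear_combination (b x y) * hcml
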